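/- Let l be a positive integer, p a prime, and D ∈ Mat_l(ℤ) a diagonal matrix whose diagonal entries d_1, ..., d_l are powers of p with exactly r of them equal to 1. If E_1, ..., E_s are pairwise orthogonal nonzero idempotents of the ring Mat_l(ℤ)_D (with multiplication A ·_D B = ADB), then s ≤ r. -/

import Mathlib

/-- Let `D = diagonal d` be an integer diagonal matrix whose entries are
powers of a prime `p`, exactly `r` of which equal `1`.  If `E 1, …, E s` are pairwise
orthogonal nonzero idempotents of the ring `Mat_l(ℤ)_D` (multiplication
`A ·_D B = A * D * B`), then `s ≤ r`. -/
theorem stmt2 {l : ℕ} (hl : 0 < l) (p : ℕ) (hp : p.Prime)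
    (d : Fin l → ℤ) (hd : ∀ i : Fin l, ∃ k : ℕ, d i = (p : ℤ) ^ k)
    (r : ℕ) (hr : r = (Finset.univ.filter fun i : Fin l => d i = 1).card)
    (s : ℕ) (E : Fin s → Matrix (Fin l) (Fin l) ℤ)
    (hne : ∀ i, E i ≠ 0)
    (hidem : ∀ i, E i * Matrix.diagonal d * E i = E i)
    (horth : ∀ i j, i ≠ j → E i * Matrix.diagonal d * E j = 0) :
    s ≤ r := by
  classical
  haveI : Fact p.Prime := ⟨hp⟩
  set K := ZMod p
  let f : ℤ →+* K := Int.castRingHom K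
  let F : Fin s → Matrix (Fin l) (Fin l) K := fun i => (E i).map f
  let d' : Fin l → K := fun a => f (d a)
  -- values of d' mod p
  have hd' : ∀ a : Fin l, (d a = 1 ∧ d' a = 1) ∨ (d a ≠ 1 ∧ d' a = 0) := by
    intro a
    obtain ⟨k, hk⟩ := hd a
    cases k with
    | zero => left; simp [hk, d', f]
    | succ k =>
      right
      constructor
      · rw [hk]
        have h2 : (1:ℤ) < (p:ℤ) := by exact_mod_cast hp.one_lt
        exact (one_lt_pow₀ h2 (Nat.succ_ne_zero k)).ne'
      · show f (d a) = 0
        rw [hk]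
        simp [f, ZMod.natCast_self]
  -- the maps of the relations mod p
  have hDmap : (Matrix.diagonal d).map f = Matrix.diagonal d' :=
    Matrix.diagonal_map (map_zero f)
  have keymap : ∀ i j : Fin s,
      F i * Matrix.diagonal d' * F j = (E i * Matrix.diagonal d * E j).map f := by
    intro i j
    rw [Matrix.map_mul, Matrix.map_mul, hDmap]
  have key : ∀ i j : Fin s,
      F i * Matrix.diagonal d' * F j = if i = j then F i else 0 := by
    intro i j
    by_cases h : i = j
    · subst h; rw [keymap, hidem i]; simp [F]
    · rw [keymap, horth i j h]; simp [h]
  -- F i ≠ 0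
  have hF : ∀ i, F i ≠ 0 := by
    intro i h
    apply hne i
    have h1 : ∀ a b, (p:ℤ) ∣ E i a b := by
      intro a b
      have := congrFun (congrFun h a) b
      exact (ZMod.intCast_zmod_eq_zero_iff_dvd _ p).mp
        (by simpa [F, f, Matrix.map_apply] using this)
    have hdvd : ∀ n : ℕ, ∀ a b, (p:ℤ) ^ (n+1) ∣ E i a b := by
      intro n
      induction n with
      | zero => simpa using h1
      | succ n ih =>
        intro a b
        have : E i a b = ∑ x, E i a x * d x * E i x b := by
          conv_lhs => rw [← hidem i]
          rw [Matrix.mul_apply]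
          congr 1; funext x
          rw [Matrix.mul_diagonal]
        rw [this]
        apply Finset.dvd_sum
        intro x _
        have h2 : (p:ℤ) ^ (n+2) = (p:ℤ) ^ (n+1) * (p:ℤ) := by ring
        rw [h2]
        exact mul_dvd_mul ((ih a x).mul_right (d x))
          (dvd_trans (dvd_pow_self (p:ℤ) (Nat.succ_ne_zero n)) (ih x b))
    funext a b
    show E i a b = (0 : Matrix (Fin l) (Fin l) ℤ) a b
    simp only [Matrix.zero_apply]
    by_contra hx
    have hlt : ((E i a b).natAbs : ℤ) < (p:ℤ) ^ ((E i a b).natAbs + 1) := by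
      have h1 : (E i a b).natAbs < p ^ ((E i a b).natAbs) :=
        Nat.lt_pow_self hp.one_lt
      have h2 : p ^ ((E i a b).natAbs) ≤ p ^ ((E i a b).natAbs + 1) :=
        Nat.pow_le_pow_right hp.pos (Nat.le_succ _)
      exact_mod_cast lt_of_lt_of_le h1 h2
    have hle : (p:ℤ) ^ ((E i a b).natAbs + 1) ≤ |E i a b| := by
      apply Int.le_of_dvd (abs_pos.mpr hx)
      exact (dvd_abs _ _).mpr (hdvd _ a b)
    rw [Int.abs_eq_natAbs] at hle
    omega
  -- the idempotents G i in Mat_l(K)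
  let G : Fin s → Matrix (Fin l) (Fin l) K := fun i => Matrix.diagonal d' * F i
  have hGG : ∀ i j : Fin s, G i * G j = if i = j then G j else 0 := by
    intro i j
    show Matrix.diagonal d' * F i * (Matrix.diagonal d' * F j) = _
    have : Matrix.diagonal d' * F i * (Matrix.diagonal d' * F j)
        = Matrix.diagonal d' * (F i * Matrix.diagonal d' * F j) := by
      noncomm_ring
    rw [this, key]
    by_cases h : i = j <;> simp [h, G]
  have hG0 : ∀ i, G i ≠ 0 := by
    intro i h
    apply hF i
    have := key i i
    rw [if_pos rfl] at this
    rw [← this, mul_assoc]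
    show F i * G i = 0
    rw [h, mul_zero]
  -- pick a nonzero column of each G i
  have hcol : ∀ i, ∃ c : Fin l, (fun a => G i a c) ≠ 0 := by
    intro i
    by_contra h
    push_neg at h
    apply hG0 i
    funext a c
    have := congrFun (h c) a
    simpa using this
  choose c hc using hcol
  let v : Fin s → (Fin l → K) := fun i a => G i a (c i)
  -- action of G j on v i
  have hGv : ∀ j i, (G j).mulVec (v i) = if j = i then v i else 0 := by
    intro j i
    have : (G j).mulVec (v i) = fun a => (G j * G i) a (c i) := by
      funext a
      rw [Matrix.mulVec, dotProduct, Matrix.mul_apply]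
    rw [this, hGG]
    by_cases h : j = i
    · simp [h, v]
    · simp only [if_neg h]
      funext a
      simp
  -- rows of v i vanish off S
  have hvanish : ∀ i a, d a ≠ 1 → v i a = 0 := by
    intro i a ha
    show (Matrix.diagonal d' * F i) a (c i) = 0
    rw [Matrix.diagonal_mul]
    rcases hd' a with ⟨h1, _⟩ | ⟨_, h2⟩
    · exact absurd h1 ha
    · rw [h2, zero_mul]
  -- restrict to the support set S
  set S : Finset (Fin l) := Finset.univ.filter fun a => d a = 1 with hS
  let w : Fin s → (↥S → K) := fun i a => v i a.1
  have hw : LinearIndependent K w := by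
    rw [Fintype.linearIndependent_iff]
    intro g hg j
    have hsum : ∑ i, g i • v i = 0 := by
      funext a
      by_cases ha : d a = 1
      · have haS : a ∈ S := by simp [hS, ha]
        have := congrFun hg ⟨a, haS⟩
        simpa [w] using this
      · simp only [Finset.sum_apply, Pi.smul_apply, Pi.zero_apply]
        apply Finset.sum_eq_zero
        intro i _
        rw [hvanish i a ha, smul_zero]
    have happ : (G j).mulVec (∑ i, g i • v i) = g j • v j := by
      rw [show (∑ i, g i • v i) = ∑ i, g i • v i from rfl]
      rw [← (G j).mulVecLin_apply, map_sum]
      have : ∀ i, (G j).mulVecLin (g i • v i) = g i • (if j = i then v i else 0) := by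
        intro i
        rw [map_smul, (G j).mulVecLin_apply, hGv]
      simp_rw [this]
      rw [Finset.sum_eq_single j]
      · simp
      · intro b _ hb; simp [Ne.symm hb]
      · intro hj; exact absurd (Finset.mem_univ j) hj
    rw [hsum, Matrix.mulVec_zero] at happ
    have := happ.symm
    rcases smul_eq_zero.mp this with h | h
    · exact h
    · exact absurd h (hc j)
  have hcard := hw.fintype_card_le_finrank
  rw [Module.finrank_pi K, Fintype.card_coe] at hcard
  rw [hr]
  simpa using hcard
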